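/- arXiv:2506.20188 — 2 statements merged into one kernel-verified Lean document; each statement's English description precedes it below -/
import Mathlib

section
/- With the same setup, the set {P φ_i : i ∈ S} is linearly independent and spans U^⊥; in particular it is a basis of U^⊥, so dim U^⊥ = |S|. -/
theorem projected_basis_is_basis
    (V : Type*) [NormedAddCommGroup V] [InnerProductSpace ℝ V]
    [FiniteDimensional ℝ V]
    (n : ℕ) (φ : Module.Basis (Fin n) ℝ V) (l : Fin n → Module.Dual ℝ V)
    (hbio : ∀ i j, l i (φ j) = if i = j then (1 : ℝ) else 0)
    (S : Finset (Fin n))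
    (U : Submodule ℝ V) (hU : U = ⨅ i ∈ S, LinearMap.ker (l i)) :
    LinearIndependent ℝ (fun i : S => (Submodule.orthogonalProjectionOnto Uᗮ (φ i) : V)) ∧
      Submodule.span ℝ (Set.range (fun i : S => (Submodule.orthogonalProjectionOnto Uᗮ (φ i) : V))) = Uᗮ ∧
      Module.finrank ℝ Uᗮ = S.card := by
  have hdiff : ∀ v : V, v - (Submodule.orthogonalProjectionOnto Uᗮ v : V) ∈ U := by
    intro v
    have := Submodule.sub_starProjection_mem_orthogonal (K := Uᗮ) v
    rwa [Submodule.orthogonal_orthogonal] at this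
  have hbasisU : ∀ j : Fin n, j ∉ S → φ j ∈ U := by
    intro j hj
    rw [hU]
    simp only [Submodule.mem_iInf, LinearMap.mem_ker]
    intro i hi
    rw [hbio, if_neg]
    rintro rfl; exact hj hi
  -- linear independence
  have hind : LinearIndependent ℝ (fun i : S => (Submodule.orthogonalProjectionOnto Uᗮ (φ i) : V)) := by
    rw [Fintype.linearIndependent_iff]
    intro g hg j
    have h1 : (∑ i : S, g i • (φ i - (Submodule.orthogonalProjectionOnto Uᗮ (φ i) : V))) ∈ U :=
      Submodule.sum_mem _ fun i _ => Submodule.smul_mem _ _ (hdiff (φ i))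
    have h2 : (∑ i : S, g i • (φ i - (Submodule.orthogonalProjectionOnto Uᗮ (φ i) : V)))
        = ∑ i : S, g i • φ i := by
      simp only [smul_sub, Finset.sum_sub_distrib, hg, sub_zero]
    rw [h2] at h1
    have h3 : l j (∑ i : S, g i • φ i) = g j := by
      rw [map_sum]
      simp only [map_smul, hbio, smul_eq_mul]
      rw [Finset.sum_eq_single j]
      · simp
      · intro b _ hb
        rw [if_neg, mul_zero]
        exact fun h => hb (Subtype.ext h.symm)
      · simp
    rw [hU] at h1
    simp only [Submodule.mem_iInf, LinearMap.mem_ker] at h1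
    rw [← h3]
    exact h1 j j.2
  have hind' : LinearIndependent ℝ
      (fun i : S => (⟨(Submodule.orthogonalProjectionOnto Uᗮ (φ i) : V), SetLike.coe_mem _⟩ : Uᗮ)) :=
    LinearIndependent.of_comp Uᗮ.subtype hind
  have hV : Module.finrank ℝ V = n := by
    rw [Module.finrank_eq_card_basis φ, Fintype.card_fin]
  have hle : n - S.card ≤ Module.finrank ℝ U := by
    have hsub : Submodule.span ℝ (Set.range (fun j : (Sᶜ : Finset (Fin n)) => φ j)) ≤ U := by
      rw [Submodule.span_le]
      rintro _ ⟨j, rfl⟩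
      exact hbasisU j (Finset.mem_compl.mp j.2)
    have hindc : LinearIndependent ℝ (fun j : (Sᶜ : Finset (Fin n)) => φ j) :=
      φ.linearIndependent.comp _ Subtype.val_injective
    have h := Submodule.finrank_mono hsub
    rw [finrank_span_eq_card hindc] at h
    simpa [Fintype.card_coe, Finset.card_compl] using h
  have hge : S.card ≤ Module.finrank ℝ Uᗮ := by
    have := hind'.fintype_card_le_finrank
    simpa [Fintype.card_coe] using this
  have hsum := Submodule.finrank_add_finrank_orthogonal (K := U)
  rw [hV] at hsum
  have hcardle : S.card ≤ n := by simpa using Finset.card_le_univ S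
  have hcard : Module.finrank ℝ Uᗮ = S.card := by omega
  refine ⟨hind, ?_, hcard⟩
  apply Submodule.eq_of_le_of_finrank_le
  · rw [Submodule.span_le]
    rintro _ ⟨i, rfl⟩
    exact SetLike.coe_mem _
  · rw [finrank_span_eq_card hind, Fintype.card_coe, hcard]
end

section
/- The pyramid Lagrange space P^{pyr,Lag}_k := span{ x^{p_0} y^{p_1} z^{p_2} / (1-z)^{min(p_0,p_1)} : p_0 + p_2 ≤ k, p_1 + p_2 ≤ k } is a subspace of the natural pyramid rationomial space P^pyr_k := span{ x^{p_0} y^{p_1} z^{p_2} / (1-z)^{p_0+p_1} : p_0, p_1, p_2 ≤ k }, as spaces of functions on the open reference pyramid {(x,y,z) : 0 ≤ x, 0 ≤ y, 0 ≤ z < 1, x+z ≤ 1, y+z ≤ 1}. -/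
/-- The open reference pyramid (with apex excluded, `z < 1`). -/
def refPyramid : Set (ℝ × ℝ × ℝ) :=
  {v | 0 ≤ v.1 ∧ 0 ≤ v.2.1 ∧ 0 ≤ v.2.2 ∧ v.2.2 < 1 ∧ v.1 + v.2.2 ≤ 1 ∧ v.2.1 + v.2.2 ≤ 1}

/-- The natural pyramid rationomial space of degree `k`, as a space of functions on the
open reference pyramid. -/
noncomputable def pyramidNatural (k : ℕ) : Submodule ℝ (refPyramid → ℝ) :=
  Submodule.span ℝ
    {f | ∃ p₀ p₁ p₂ : ℕ, p₀ ≤ k ∧ p₁ ≤ k ∧ p₂ ≤ k ∧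
      f = fun v : refPyramid =>
        (v : ℝ × ℝ × ℝ).1 ^ p₀ * (v : ℝ × ℝ × ℝ).2.1 ^ p₁ * (v : ℝ × ℝ × ℝ).2.2 ^ p₂ /
          (1 - (v : ℝ × ℝ × ℝ).2.2) ^ (p₀ + p₁)}

/-- The span of the degree-`k` pyramid Lagrange element, as a space of functions on the
open reference pyramid. -/
noncomputable def pyramidLagrange (k : ℕ) : Submodule ℝ (refPyramid → ℝ) :=
  Submodule.span ℝ
    {f | ∃ p₀ p₁ p₂ : ℕ, p₀ + p₂ ≤ k ∧ p₁ + p₂ ≤ k ∧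
      f = fun v : refPyramid =>
        (v : ℝ × ℝ × ℝ).1 ^ p₀ * (v : ℝ × ℝ × ℝ).2.1 ^ p₁ * (v : ℝ × ℝ × ℝ).2.2 ^ p₂ /
          (1 - (v : ℝ × ℝ × ℝ).2.2) ^ (min p₀ p₁)}

lemma key_identity (p₀ p₁ p₂ : ℕ) {x y z : ℝ} (hz : z < 1) :
    x ^ p₀ * y ^ p₁ * z ^ p₂ / (1 - z) ^ (min p₀ p₁)
      = ∑ j ∈ Finset.range (max p₀ p₁ + 1),
          ((-1:ℝ) ^ j * (Nat.choose (max p₀ p₁) j : ℝ)) *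
            (x ^ p₀ * y ^ p₁ * z ^ (p₂ + j) / (1 - z) ^ (p₀ + p₁)) := by
  have h1 : (1:ℝ) - z ≠ 0 := by linarith
  have hb : ((-z) + 1) ^ (max p₀ p₁)
      = ∑ j ∈ Finset.range (max p₀ p₁ + 1),
          (-z) ^ j * 1 ^ (max p₀ p₁ - j) * (Nat.choose (max p₀ p₁) j : ℝ) :=
    add_pow (-z) 1 (max p₀ p₁)
  have hb' : (1 - z) ^ (max p₀ p₁)
      = ∑ j ∈ Finset.range (max p₀ p₁ + 1),
          (-1:ℝ) ^ j * (Nat.choose (max p₀ p₁) j : ℝ) * z ^ j := by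
    rw [show (1:ℝ) - z = (-z) + 1 by ring, hb]
    refine Finset.sum_congr rfl fun j _ => ?_
    rw [neg_pow]; ring
  have hsplit : p₀ + p₁ = min p₀ p₁ + max p₀ p₁ := (min_add_max p₀ p₁).symm
  calc x ^ p₀ * y ^ p₁ * z ^ p₂ / (1 - z) ^ (min p₀ p₁)
      = (x ^ p₀ * y ^ p₁ * z ^ p₂ / (1 - z) ^ (p₀ + p₁)) * (1 - z) ^ (max p₀ p₁) := by
        rw [hsplit, pow_add]
        field_simp
    _ = ∑ j ∈ Finset.range (max p₀ p₁ + 1),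
          ((-1:ℝ) ^ j * (Nat.choose (max p₀ p₁) j : ℝ)) *
            (x ^ p₀ * y ^ p₁ * z ^ (p₂ + j) / (1 - z) ^ (p₀ + p₁)) := by
        rw [hb', Finset.mul_sum]
        refine Finset.sum_congr rfl fun j _ => ?_
        rw [pow_add]
        ring

theorem pyramid_lagrange_subspace_of_natural (k : ℕ) :
    pyramidLagrange k ≤ pyramidNatural k := by
  rw [pyramidLagrange, Submodule.span_le]
  rintro f ⟨p₀, p₁, p₂, h0, h1, rfl⟩
  have hf : (fun v : refPyramid =>
        (v : ℝ × ℝ × ℝ).1 ^ p₀ * (v : ℝ × ℝ × ℝ).2.1 ^ p₁ * (v : ℝ × ℝ × ℝ).2.2 ^ p₂ /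
          (1 - (v : ℝ × ℝ × ℝ).2.2) ^ (min p₀ p₁))
      = ∑ j ∈ Finset.range (max p₀ p₁ + 1),
          ((-1:ℝ) ^ j * (Nat.choose (max p₀ p₁) j : ℝ)) •
            (fun v : refPyramid =>
              (v : ℝ × ℝ × ℝ).1 ^ p₀ * (v : ℝ × ℝ × ℝ).2.1 ^ p₁ *
                (v : ℝ × ℝ × ℝ).2.2 ^ (p₂ + j) /
                (1 - (v : ℝ × ℝ × ℝ).2.2) ^ (p₀ + p₁)) := by
    funext v
    have hz : (v : ℝ × ℝ × ℝ).2.2 < 1 := v.2.2.2.2.1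
    simpa [Finset.sum_apply, Pi.smul_apply, smul_eq_mul] using
      key_identity p₀ p₁ p₂ hz (x := (v : ℝ × ℝ × ℝ).1) (y := (v : ℝ × ℝ × ℝ).2.1)
  rw [hf]
  refine Submodule.sum_mem _ fun j hj => Submodule.smul_mem _ _ (Submodule.subset_span ?_)
  refine ⟨p₀, p₁, p₂ + j, le_trans (Nat.le_add_right _ _) h0,
    le_trans (Nat.le_add_right _ _) h1, ?_, rfl⟩
  have hj' : j ≤ max p₀ p₁ := Nat.lt_succ_iff.mp (Finset.mem_range.mp hj)
  rcases max_cases p₀ p₁ with ⟨hm, _⟩ | ⟨hm, _⟩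
  · omega
  · omega
end
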